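/- If a discrete Lagrangian L_d: Q × Q → ℝ is invariant under the diagonal action of a Lie group G (L_d(g·q_0, g·q_1) = L_d(q_0, q_1)), then the discrete momentum map J_{L_d}(q_k, q_{k+1})·ξ = ⟨−D_1 L_d(q_k, q_{k+1}), ξ_Q(q_k)⟩ is preserved by the discrete Lagrangian map F_{L_d} defined by the discrete Euler–Lagrange equation: J_{L_d} ∘ F_{L_d} = J_{L_d}. -/

import Mathlib

lemma noether_key
    {E : Type*} [NormedAddCommGroup E] [NormedSpace ℝ E]
    (Ld : E → E → ℝ)
    (hLd : Differentiable ℝ fun p : E × E => Ld p.1 p.2)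
    (Φ : ℝ → E → E) (ξQ : E → E)
    (hΦ0 : ∀ q, Φ 0 q = q)
    (hgen : ∀ q, HasDerivAt (fun t => Φ t q) (ξQ q) 0)
    (hinv : ∀ (t : ℝ) (q0 q1 : E), Ld (Φ t q0) (Φ t q1) = Ld q0 q1)
    (a b : E) :
    (fderiv ℝ (fun x => Ld x b) a) (ξQ a) + (fderiv ℝ (fun y => Ld a y) b) (ξQ b) = 0 := by
  have hF := (hLd (a, b)).hasFDerivAt
  -- curve derivative
  have hcurve : HasDerivAt (fun t => ((Φ t a, Φ t b) : E × E)) (ξQ a, ξQ b) 0 :=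
    HasDerivAt.prodMk (hgen a) (hgen b)
  have hcomp : HasDerivAt (fun t => Ld (Φ t a) (Φ t b))
      ((fderiv ℝ (fun p : E × E => Ld p.1 p.2) (a, b)) (ξQ a, ξQ b)) 0 := by
    have hF' : HasFDerivAt (fun p : E × E => Ld p.1 p.2)
        (fderiv ℝ (fun p : E × E => Ld p.1 p.2) (a, b)) ((fun t => ((Φ t a, Φ t b) : E × E)) 0) := by
      simpa [hΦ0] using hF
    exact hF'.comp_hasDerivAt 0 hcurve
  have hconst : (fun t => Ld (Φ t a) (Φ t b)) = fun _ => Ld a b := by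
    funext t; exact hinv t a b
  have hzero : (fderiv ℝ (fun p : E × E => Ld p.1 p.2) (a, b)) (ξQ a, ξQ b) = 0 := by
    have : HasDerivAt (fun _ : ℝ => Ld a b)
        ((fderiv ℝ (fun p : E × E => Ld p.1 p.2) (a, b)) (ξQ a, ξQ b)) 0 := hconst ▸ hcomp
    have h0 : HasDerivAt (fun _ : ℝ => Ld a b) 0 0 := hasDerivAt_const _ _
    exact this.unique h0
  -- partial derivatives
  have h1 : HasFDerivAt (fun x => Ld x b)
      ((fderiv ℝ (fun p : E × E => Ld p.1 p.2) (a, b)).comp (ContinuousLinearMap.inl ℝ E E)) a := by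
    have hg : HasFDerivAt (fun x : E => ((x, b) : E × E)) (ContinuousLinearMap.inl ℝ E E) a :=
      HasFDerivAt.prodMk (hasFDerivAt_id a) (hasFDerivAt_const b a)
    exact hF.comp a hg
  have h2 : HasFDerivAt (fun y => Ld a y)
      ((fderiv ℝ (fun p : E × E => Ld p.1 p.2) (a, b)).comp (ContinuousLinearMap.inr ℝ E E)) b := by
    have hg : HasFDerivAt (fun y : E => ((a, y) : E × E)) (ContinuousLinearMap.inr ℝ E E) b :=
      HasFDerivAt.prodMk (hasFDerivAt_const a b) (hasFDerivAt_id b)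
    exact hF.comp b hg
  rw [h1.fderiv, h2.fderiv]
  simp only [ContinuousLinearMap.comp_apply, ContinuousLinearMap.inl_apply,
    ContinuousLinearMap.inr_apply]
  have : ((ξQ a, ξQ b) : E × E) = (ξQ a, 0) + (0, ξQ b) := by simp
  rw [← map_add]
  simpa [Prod.mk_add_mk] using hzero

theorem discrete_noether
    {E : Type*} [NormedAddCommGroup E] [NormedSpace ℝ E]
    (Ld : E → E → ℝ)
    (hLd : Differentiable ℝ fun p : E × E => Ld p.1 p.2)
    (Φ : ℝ → E → E) (ξQ : E → E)
    (hΦ0 : ∀ q, Φ 0 q = q)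
    (hgen : ∀ q, HasDerivAt (fun t => Φ t q) (ξQ q) 0)
    (hinv : ∀ (t : ℝ) (q0 q1 : E), Ld (Φ t q0) (Φ t q1) = Ld q0 q1)
    (q0 q1 q2 : E)
    (hDEL : fderiv ℝ (fun y => Ld q0 y) q1 + fderiv ℝ (fun x => Ld x q2) q1 = 0) :
    -(fderiv ℝ (fun x => Ld x q2) q1) (ξQ q1) =
      -(fderiv ℝ (fun x => Ld x q1) q0) (ξQ q0) := by
  have h01 := noether_key Ld hLd Φ ξQ hΦ0 hgen hinv q0 q1
  have hDEL' : (fderiv ℝ (fun y => Ld q0 y) q1) (ξQ q1)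
      + (fderiv ℝ (fun x => Ld x q2) q1) (ξQ q1) = 0 := by
    have := congrArg (fun L => L (ξQ q1)) hDEL
    simpa using this
  linarith
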